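/- Let ℓ : [0,∞) → [0,∞) be a convex strictly increasing function, let A < B be reals with D = B − A, let μ be a Borel probability measure on ℝ with support contained in [A,B], and let c ∈ [A,B]. Define D⁺(c) = ∫_{(−∞,c]} ℓ'₊(c − x) dμ(x) − ∫_{(c,∞)} ℓ'₋(x − c) dμ(x) and D⁻(c) = ∫_{[c,∞)} ℓ'₊(x − c) dμ(x) − ∫_{(−∞,c)} ℓ'₋(c − x) dμ(x), and assume D⁺(c) > 0 and D⁻(c) > 0. Then c is the unique minimizer over ℝ of φ(α) = ∫ ℓ(|α − x|) dμ(x); moreover, if X₁, …, X_n are i.i.d. with distribution μ and φ̂_n(α) = (1/n) Σ_{k=1}^n ℓ(|α − X_k|), then the set of minimizers of φ̂_n over ℝ equals {c} with probability at least 1 − exp(−n·D⁺(c)²/(2 ℓ'₊(D)²)) − exp(−n·D⁻(c)²/(2 ℓ'₊(D)²)). -/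

import Mathlib

open MeasureTheory

open MeasureTheory Set Filter Real

section Core
variable {ℓ ℓp ℓm : ℝ → ℝ}
  (h_convex : ConvexOn ℝ (Set.Ici 0) ℓ)
  (h_smono : StrictMonoOn ℓ (Set.Ici 0))
  (h_right : ∀ z, 0 ≤ z → HasDerivWithinAt ℓ (ℓp z) (Set.Ici z) z)
  (h_left : ∀ z, 0 < z → HasDerivWithinAt ℓ (ℓm z) (Set.Iic z) z)

include h_convex h_right in
lemma aux_T1 {z w : ℝ} (hz : 0 ≤ z) (hzw : z < w) : ℓp z * (w - z) ≤ ℓ w - ℓ z := by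
  have h := h_convex.le_slope_of_hasDerivWithinAt_Ioi hz (hz.trans hzw.le) hzw
    (((h_right z hz)).mono Ioi_subset_Ici_self)
  rw [slope_def_field] at h
  have hwz : (0:ℝ) < w - z := by linarith
  calc ℓp z * (w - z) ≤ (ℓ w - ℓ z) / (w - z) * (w - z) := by
        exact mul_le_mul_of_nonneg_right h hwz.le
    _ = ℓ w - ℓ z := by field_simp

include h_convex h_left in
lemma aux_T2 {w z : ℝ} (hw : 0 ≤ w) (hwz : w < z) : ℓ z - ℓ w ≤ ℓm z * (z - w) := by
  have hz : (0:ℝ) < z := lt_of_le_of_lt hw hwz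
  have h := h_convex.slope_le_of_hasDerivWithinAt_Iio hw hz.le hwz
    ((h_left z hz).mono Iio_subset_Iic_self)
  rw [slope_def_field] at h
  have hzw : (0:ℝ) < z - w := by linarith
  calc ℓ z - ℓ w = (ℓ z - ℓ w) / (z - w) * (z - w) := by field_simp
    _ ≤ ℓm z * (z - w) := mul_le_mul_of_nonneg_right h hzw.le

include h_left in
lemma aux_lm_slope_lim {z : ℝ} (hz : 0 < z) :
    Tendsto (slope ℓ z) (nhdsWithin z (Iio z)) (nhds (ℓm z)) :=
  (hasDerivWithinAt_iff_tendsto_slope' notMem_Iio_self).mp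
    ((h_left z hz).mono Iio_subset_Iic_self)

include h_right in
lemma aux_lp_slope_lim {z : ℝ} (hz : 0 ≤ z) :
    Tendsto (slope ℓ z) (nhdsWithin z (Ioi z)) (nhds (ℓp z)) :=
  (hasDerivWithinAt_iff_tendsto_slope' notMem_Ioi_self).mp
    ((h_right z hz).mono Ioi_subset_Ici_self)

include h_convex h_left in
lemma aux_T3 {z w : ℝ} (hz : 0 < z) (hzw : z < w) : ℓm z ≤ slope ℓ z w := by
  refine le_of_tendsto (aux_lm_slope_lim h_left hz) ?_
  have h1 : ∀ᶠ u in nhdsWithin z (Iio z), 0 < u :=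
    eventually_nhdsWithin_of_eventually_nhds (eventually_gt_nhds hz)
  filter_upwards [h1, self_mem_nhdsWithin] with u hu0 (hu : u < z)
  have := h_convex.secant_mono (le_of_lt hz : z ∈ Ici 0) (hu0.le : u ∈ Ici 0)
    ((hz.le.trans hzw.le) : w ∈ Ici 0) hu.ne (ne_of_gt hzw) (hu.le.trans hzw.le)
  simp only [slope_def_field]
  exact this

include h_convex h_left h_right in
lemma aux_lm_le_lp {z : ℝ} (hz : 0 < z) : ℓm z ≤ ℓp z := by
  refine ge_of_tendsto (aux_lp_slope_lim h_right hz.le) ?_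
  filter_upwards [self_mem_nhdsWithin] with w (hw : z < w)
  exact aux_T3 h_convex h_left hz hw

include h_smono h_right in
lemma aux_lp_nonneg {z : ℝ} (hz : 0 ≤ z) : 0 ≤ ℓp z := by
  refine ge_of_tendsto (aux_lp_slope_lim h_right hz) ?_
  filter_upwards [self_mem_nhdsWithin] with w (hw : z < w)
  rw [slope_def_field]
  have h1 := h_smono hz (hz.trans hw.le) hw
  apply div_nonneg <;> linarith

include h_convex h_smono h_left in
lemma aux_lm_pos {z : ℝ} (hz : 0 < z) : 0 < ℓm z := by
  have h2 := aux_T2 h_convex h_left (by positivity : (0:ℝ) ≤ z/2) (by linarith : z/2 < z)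
  have h3 := h_smono (by positivity : (0:ℝ) ≤ z/2) hz.le (by linarith)
  nlinarith

include h_convex h_smono h_left h_right in
lemma aux_lp_mono {z w : ℝ} (hz : 0 ≤ z) (hzw : z ≤ w) : ℓp z ≤ ℓp w := by
  rcases eq_or_lt_of_le hzw with rfl | h
  · exact le_refl _
  · have hw : 0 < w := lt_of_le_of_lt hz h
    have h1 := aux_T1 h_convex h_right hz h
    have h2 := aux_T2 h_convex h_left hz h
    have h3 := aux_lm_le_lp h_convex h_right h_left hw
    have hwz : (0:ℝ) < w - z := by linarith
    nlinarith [mul_le_mul_of_nonneg_right h3 hwz.le]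

end Core
section GDef
variable (ℓp ℓm : ℝ → ℝ)

/-- One-sided derivative field of `α ↦ ℓ |α - x|` evaluated from the right at `t`. -/
noncomputable def auxG (t x : ℝ) : ℝ :=
  if x ≤ t then ℓp (max (t - x) 0) else -(if 0 < x - t then ℓm (x - t) else 0)

end GDef

section GLemmas
variable {ℓ ℓp ℓm : ℝ → ℝ}
  (h_convex : ConvexOn ℝ (Set.Ici 0) ℓ)
  (h_smono : StrictMonoOn ℓ (Set.Ici 0))
  (h_right : ∀ z, 0 ≤ z → HasDerivWithinAt ℓ (ℓp z) (Set.Ici z) z)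
  (h_left : ∀ z, 0 < z → HasDerivWithinAt ℓ (ℓm z) (Set.Iic z) z)

lemma auxG_of_le {t x : ℝ} (h : x ≤ t) : auxG ℓp ℓm t x = ℓp (t - x) := by
  rw [auxG, if_pos h, max_eq_left (by linarith)]

lemma auxG_of_gt {t x : ℝ} (h : t < x) : auxG ℓp ℓm t x = -ℓm (x - t) := by
  rw [auxG, if_neg (not_le.mpr h), if_pos (by linarith)]

include h_convex h_smono h_right h_left in
lemma auxG_measurable (t : ℝ) : Measurable (auxG ℓp ℓm t) := by
  have hmono1 : Monotone (fun z : ℝ => ℓp (max z 0)) := by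
    intro a b hab
    exact aux_lp_mono h_convex h_smono h_right h_left (le_max_right a 0)
      (max_le_max hab le_rfl)
  have hlm_mono : ∀ {a b : ℝ}, 0 < a → a ≤ b → ℓm a ≤ ℓm b := by
    intro a b ha hab
    rcases eq_or_lt_of_le hab with rfl | h
    · exact le_refl _
    · have h1 := aux_lm_le_lp h_convex h_right h_left ha
      have h2 := aux_T1 h_convex h_right ha.le h
      have h3 := aux_T2 h_convex h_left ha.le h
      have hba : (0:ℝ) < b - a := by linarith
      nlinarith [mul_le_mul_of_nonneg_right h1 hba.le]
  have hmono2 : Monotone (fun z : ℝ => if 0 < z then ℓm z else 0) := by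
    intro a b hab
    dsimp only
    by_cases ha : 0 < a
    · rw [if_pos ha, if_pos (lt_of_lt_of_le ha hab)]
      exact hlm_mono ha hab
    · rw [if_neg ha]
      by_cases hb : 0 < b
      · rw [if_pos hb]
        exact (aux_lm_pos h_convex h_smono h_left hb).le
      · rw [if_neg hb]
  have m1 : Measurable (fun x : ℝ => ℓp (max (t - x) 0)) := by
    have : Antitone (fun x : ℝ => ℓp (max (t - x) 0)) := by
      intro a b hab
      exact hmono1 (by linarith : t - b ≤ t - a)
    exact this.measurable
  have m2 : Measurable (fun x : ℝ => -(if 0 < x - t then ℓm (x - t) else 0)) := by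
    have : Monotone (fun x : ℝ => (if 0 < x - t then ℓm (x - t) else 0)) := by
      intro a b hab
      exact hmono2 (by linarith)
    exact this.measurable.neg
  exact Measurable.ite measurableSet_Iic m1 m2

include h_convex h_smono h_right h_left in
lemma auxG_tangent {t β : ℝ} (htβ : t < β) (x : ℝ) :
    (β - t) * auxG ℓp ℓm t x ≤ ℓ |β - x| - ℓ |t - x| := by
  have hmono : ∀ {a b : ℝ}, 0 ≤ a → a ≤ b → ℓ a ≤ ℓ b := by
    intro a b ha hab
    rcases eq_or_lt_of_le hab with rfl | h
    · exact le_refl _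
    · exact (h_smono ha (ha.trans hab) h).le
  by_cases hx : x ≤ t
  · rw [auxG_of_le hx, abs_of_nonneg (by linarith), abs_of_nonneg (by linarith)]
    have := aux_T1 h_convex h_right (by linarith : (0:ℝ) ≤ t - x)
      (by linarith : t - x < β - x)
    calc (β - t) * ℓp (t - x) = ℓp (t - x) * ((β - x) - (t - x)) := by ring
      _ ≤ ℓ (β - x) - ℓ (t - x) := this
  · push_neg at hx
    rw [auxG_of_gt hx, abs_of_nonpos (by linarith : t - x ≤ 0)]
    set z := x - t with hzdef
    have hz : 0 < z := by simp [hzdef]; linarith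
    set w := |β - x| with hwdef
    have hw : 0 ≤ w := abs_nonneg _
    have hneg : -(t - x) = z := by ring
    rw [hneg]
    have hlm := aux_lm_pos h_convex h_smono h_left hz
    rcases le_or_gt z w with hzw | hwz
    · have h1 : ℓ z ≤ ℓ w := hmono hz.le hzw
      nlinarith
    · have h2 := aux_T2 h_convex h_left hw hwz
      have h3 : z - w ≤ β - t := by
        have hxb : x - β ≤ w := by
          rw [hwdef, abs_sub_comm]
          exact le_abs_self _
        simp only [hzdef]
        linarith
      nlinarith
end GLemmas
section KeyLemmas
variable {ℓ ℓp ℓm : ℝ → ℝ}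
  (h_convex : ConvexOn ℝ (Set.Ici 0) ℓ)
  (h_smono : StrictMonoOn ℓ (Set.Ici 0))
  (h_right : ∀ z, 0 ≤ z → HasDerivWithinAt ℓ (ℓp z) (Set.Ici z) z)
  (h_left : ∀ z, 0 < z → HasDerivWithinAt ℓ (ℓm z) (Set.Iic z) z)

include h_convex h_smono h_right h_left in
lemma auxG_abs_le {t x L : ℝ} (h1 : t - x ≤ L) (h2 : x - t ≤ L) (hL : 0 < L) :
    |auxG ℓp ℓm t x| ≤ ℓp L := by
  have hLp : 0 < ℓp L := by
    have := aux_lm_pos h_convex h_smono h_left hL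
    have := aux_lm_le_lp h_convex h_right h_left hL
    linarith
  rw [abs_le]
  by_cases hx : x ≤ t
  · rw [auxG_of_le hx]
    constructor
    · have := aux_lp_nonneg h_smono h_right (by linarith : (0:ℝ) ≤ t - x)
      linarith
    · exact aux_lp_mono h_convex h_smono h_right h_left (by linarith) h1
  · push_neg at hx
    rw [auxG_of_gt hx]
    have hz : (0:ℝ) < x - t := by linarith
    have hm1 := aux_lm_pos h_convex h_smono h_left hz
    have hm2 := aux_lm_le_lp h_convex h_right h_left hz
    have hm3 := aux_lp_mono h_convex h_smono h_right h_left hz.le h2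
    constructor <;> linarith

include h_convex h_right h_left in
lemma aux_l_contOn : ContinuousOn ℓ (Set.Ici 0) := by
  intro z hz
  rcases eq_or_lt_of_le (Set.mem_Ici.mp hz : (0:ℝ) ≤ z) with rfl | hz0
  · exact (h_right 0 le_rfl).continuousWithinAt
  · have h1 : ContinuousWithinAt ℓ (Iic z) z := (h_left z hz0).continuousWithinAt
    have h2 : ContinuousWithinAt ℓ (Ici z) z := (h_right z hz0.le).continuousWithinAt
    have h3 : ContinuousWithinAt ℓ (Iic z ∪ Ici z) z := h1.union h2
    rw [Iic_union_Ici] at h3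
    exact h3.mono (subset_univ _)

include h_convex h_right h_left in
lemma aux_l_comp_cont (β : ℝ) : Continuous (fun x : ℝ => ℓ |β - x|) := by
  have h1 : Continuous (fun x : ℝ => |β - x|) := (continuous_const.sub continuous_id).abs
  exact (aux_l_contOn h_convex h_right h_left).comp_continuous h1 (fun x => Set.mem_Ici.mpr (abs_nonneg _))

/-- Splitting the integral of `auxG t` (for general finite measures). -/
lemma auxG_integral_split (ν : Measure ℝ) (t : ℝ)
    (hint : Integrable (auxG ℓp ℓm t) ν) :
    ∫ x, auxG ℓp ℓm t x ∂ν =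
      (∫ x in Set.Iic t, ℓp (t - x) ∂ν) - ∫ x in Set.Ioi t, ℓm (x - t) ∂ν := by
  have hsplit := integral_add_compl (measurableSet_Iic (a := t)) hint
  rw [compl_Iic] at hsplit
  have e1 : ∫ x in Set.Iic t, auxG ℓp ℓm t x ∂ν = ∫ x in Set.Iic t, ℓp (t - x) ∂ν := by
    refine setIntegral_congr_fun measurableSet_Iic (fun x hx => ?_)
    exact auxG_of_le hx
  have e2 : ∫ x in Set.Ioi t, auxG ℓp ℓm t x ∂ν = -∫ x in Set.Ioi t, ℓm (x - t) ∂ν := by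
    rw [← integral_neg]
    refine setIntegral_congr_fun measurableSet_Ioi (fun x hx => ?_)
    exact auxG_of_gt hx
  rw [e1, e2] at hsplit
  linarith [hsplit]

lemma auxG_integral_split' (ν : Measure ℝ) (c : ℝ)
    (hint : Integrable (fun x => auxG ℓp ℓm (-c) (-x)) ν) :
    ∫ x, auxG ℓp ℓm (-c) (-x) ∂ν =
      (∫ x in Set.Ici c, ℓp (x - c) ∂ν) - ∫ x in Set.Iio c, ℓm (c - x) ∂ν := by
  have hsplit := integral_add_compl (measurableSet_Ici (a := c)) hint
  rw [compl_Ici] at hsplit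
  have e1 : ∫ x in Set.Ici c, auxG ℓp ℓm (-c) (-x) ∂ν = ∫ x in Set.Ici c, ℓp (x - c) ∂ν := by
    refine setIntegral_congr_fun measurableSet_Ici (fun x hx => ?_)
    rw [auxG_of_le (by simpa using (hx : c ≤ x))]
    ring_nf
  have e2 : ∫ x in Set.Iio c, auxG ℓp ℓm (-c) (-x) ∂ν = -∫ x in Set.Iio c, ℓm (c - x) ∂ν := by
    rw [← integral_neg]
    refine setIntegral_congr_fun measurableSet_Iio (fun x hx => ?_)
    rw [auxG_of_gt (by simpa using (hx : x < c))]
    ring_nf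
  rw [e1, e2] at hsplit
  linarith [hsplit]

include h_convex h_smono h_right h_left in
/-- Key deterministic lemma: positivity of both one-sided derivative functionals at `c`
forces the minimizing set to be exactly `{c}`. -/
lemma aux_key (c : ℝ) (ν : Measure ℝ)
    (hint : ∀ β : ℝ, Integrable (fun x => ℓ |β - x|) ν)
    (hGp : Integrable (auxG ℓp ℓm c) ν)
    (hGm : Integrable (fun x => auxG ℓp ℓm (-c) (-x)) ν)
    (hp : 0 < ∫ x, auxG ℓp ℓm c x ∂ν)
    (hm : 0 < ∫ x, auxG ℓp ℓm (-c) (-x) ∂ν) :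
    {α : ℝ | ∀ β : ℝ, (∫ x, ℓ |α - x| ∂ν) ≤ ∫ x, ℓ |β - x| ∂ν} = {c} := by
  have key : ∀ β : ℝ, β ≠ c → (∫ x, ℓ |c - x| ∂ν) < ∫ x, ℓ |β - x| ∂ν := by
    intro β hβ
    rcases lt_or_gt_of_ne hβ with hlt | hgt
    · -- β < c : use the reflected tangent inequality
      have hpt : ∀ x : ℝ, (c - β) * auxG ℓp ℓm (-c) (-x) ≤ ℓ |β - x| - ℓ |c - x| := by
        intro x
        have := auxG_tangent h_convex h_smono h_right h_left
          (by linarith : (-c : ℝ) < -β) (-x)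
        have e1 : |(-β : ℝ) - -x| = |β - x| := by rw [← abs_neg]; ring_nf
        have e2 : |(-c : ℝ) - -x| = |c - x| := by rw [← abs_neg]; ring_nf
        rw [e1, e2] at this
        calc (c - β) * auxG ℓp ℓm (-c) (-x) = (-β - -c) * auxG ℓp ℓm (-c) (-x) := by ring
          _ ≤ ℓ |β - x| - ℓ |c - x| := this
      have hintsub : Integrable (fun x => ℓ |β - x| - ℓ |c - x|) ν := (hint β).sub (hint c)
      have hmono := integral_mono (hGm.const_mul (c - β)) hintsub hpt
      rw [integral_const_mul, integral_sub (hint β) (hint c)] at hmono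
      have : 0 < (c - β) * ∫ x, auxG ℓp ℓm (-c) (-x) ∂ν :=
        mul_pos (by linarith) hm
      linarith
    · -- c < β
      have hpt : ∀ x : ℝ, (β - c) * auxG ℓp ℓm c x ≤ ℓ |β - x| - ℓ |c - x| :=
        fun x => auxG_tangent h_convex h_smono h_right h_left hgt x
      have hintsub : Integrable (fun x => ℓ |β - x| - ℓ |c - x|) ν := (hint β).sub (hint c)
      have hmono := integral_mono (hGp.const_mul (β - c)) hintsub hpt
      rw [integral_const_mul, integral_sub (hint β) (hint c)] at hmono
      have : 0 < (β - c) * ∫ x, auxG ℓp ℓm c x ∂ν := mul_pos (by linarith) hp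
      linarith
  ext α
  simp only [Set.mem_setOf_eq, Set.mem_singleton_iff]
  constructor
  · intro hα
    by_contra hne
    exact absurd (hα c) (not_le.mpr (key α hne))
  · intro hα β
    rw [hα]
    rcases eq_or_ne β c with rfl | hβ
    · exact le_refl _
    · exact (key β hβ).le
end KeyLemmas
section Hoeffding

/-- The key analytic inequality in Hoeffding's lemma. -/
lemma aux_phi_le {p : ℝ} (hp0 : 0 ≤ p) (hp1 : p ≤ 1) (u : ℝ) :
    -p * u + Real.log (1 - p + p * Real.exp u) ≤ u ^ 2 / 8 := by
  set F : ℝ → ℝ := fun v => 1 - p + p * Real.exp v with hFdef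
  have hF : ∀ v : ℝ, 0 < F v := by
    intro v
    rcases eq_or_lt_of_le hp0 with rfl | hp
    · simp [hFdef]
    · have := Real.exp_pos v
      have : 0 < p * Real.exp v := by positivity
      simp only [hFdef]
      nlinarith
  have hF' : ∀ v : ℝ, HasDerivAt F (p * Real.exp v) v := by
    intro v
    exact ((Real.hasDerivAt_exp v).const_mul p).const_add (1 - p)
  set φ : ℝ → ℝ := fun v => -p * v + Real.log (F v) with hφdef
  set φ' : ℝ → ℝ := fun v => -p + p * Real.exp v / F v with hφ'def
  have hdφ : ∀ v : ℝ, HasDerivAt φ (φ' v) v := by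
    intro v
    have h1 : HasDerivAt (fun w => Real.log (F w)) (p * Real.exp v / F v) v :=
      (hF' v).log (hF v).ne'
    exact (((hasDerivAt_id v).const_mul (-p)).add h1).congr_deriv (by simp only [hφ'def]; ring)
  set q : ℝ → ℝ := fun v => p * Real.exp v / F v with hqdef
  have hq0 : ∀ v, 0 ≤ q v := by
    intro v
    have := (hF v).le
    have := (Real.exp_pos v).le
    positivity
  have hq1 : ∀ v, q v ≤ 1 := by
    intro v
    rw [hqdef]
    rw [div_le_one (hF v)]
    simp only [hFdef]
    linarith
  have hdφ' : ∀ v : ℝ, HasDerivAt φ' (q v - (q v) ^ 2) v := by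
    intro v
    have h1 : HasDerivAt (fun w => p * Real.exp w / F w)
        ((p * Real.exp v * F v - p * Real.exp v * (p * Real.exp v)) / (F v) ^ 2) v :=
      ((Real.hasDerivAt_exp v).const_mul p).div (hF' v) (hF v).ne'
    have h2 : HasDerivAt φ' ((p * Real.exp v * F v - p * Real.exp v * (p * Real.exp v)) / (F v) ^ 2) v := by
      simpa [hφ'def] using (h1.const_add (-p))
    convert h2 using 1
    have hne : F v ≠ 0 := (hF v).ne'
    rw [hqdef]
    simp only [hFdef] at hne ⊢
    field_simp
  have hφ''le : ∀ v : ℝ, q v - (q v) ^ 2 ≤ 1 / 4 := by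
    intro v
    nlinarith [sq_nonneg (q v - 1 / 2)]
  -- k v = v/4 - φ' v is monotone
  set k : ℝ → ℝ := fun v => v / 4 - φ' v with hkdef
  have hdk : ∀ v : ℝ, HasDerivAt k (1 / 4 - (q v - (q v) ^ 2)) v := by
    intro v
    exact ((hasDerivAt_id v).div_const 4).sub (hdφ' v)
  have hkmono : Monotone k := by
    refine monotone_of_deriv_nonneg (fun v => (hdk v).differentiableAt) (fun v => ?_)
    rw [(hdk v).deriv]
    linarith [hφ''le v]
  have hφ'0 : φ' 0 = 0 := by
    simp [hφ'def, hFdef]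
  have hk0 : k 0 = 0 := by simp [hkdef, hφ'0]
  -- h v = v^2/8 - φ v has derivative k v
  set g : ℝ → ℝ := fun v => v ^ 2 / 8 - φ v with hgdef
  have hdg : ∀ v : ℝ, HasDerivAt g (k v) v := by
    intro v
    have h1 : HasDerivAt (fun w : ℝ => w ^ 2 / 8) (2 * v / 8) v := by
      simpa using (hasDerivAt_pow 2 v).div_const 8
    have := h1.sub (hdφ v)
    exact this.congr_deriv (by simp only [hkdef]; ring)
  have hg0 : g 0 = 0 := by simp [hgdef, hφdef, hFdef]
  have hgnonneg : ∀ v : ℝ, 0 ≤ g v := by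
    intro v
    rcases le_or_gt 0 v with hv | hv
    · have hmono : MonotoneOn g (Set.Ici (0:ℝ)) := by
        refine monotoneOn_of_deriv_nonneg (convex_Ici 0)
          (fun w _ => (hdg w).differentiableAt.continuousAt.continuousWithinAt)
          (fun w _ => (hdg w).differentiableAt.differentiableWithinAt) (fun w hw => ?_)
        rw [(hdg w).deriv]
        rw [interior_Ici] at hw
        calc (0:ℝ) = k 0 := hk0.symm
          _ ≤ k w := hkmono (le_of_lt hw)
      have := hmono (Set.self_mem_Ici) (Set.mem_Ici.mpr hv) hv
      linarith [hg0]
    · have hmono : AntitoneOn g (Set.Iic (0:ℝ)) := by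
        refine antitoneOn_of_deriv_nonpos (convex_Iic 0)
          (fun w _ => (hdg w).differentiableAt.continuousAt.continuousWithinAt)
          (fun w _ => (hdg w).differentiableAt.differentiableWithinAt) (fun w hw => ?_)
        rw [(hdg w).deriv]
        rw [interior_Iic] at hw
        calc k w ≤ k 0 := hkmono (le_of_lt hw)
          _ = 0 := hk0
      have := hmono (Set.mem_Iic.mpr hv.le) (Set.self_mem_Iic) hv.le
      linarith [hg0]
  have := hgnonneg u
  simp only [hgdef, hφdef] at this
  linarith

end Hoeffding
section HoeffMgf
open Real

/-- Hoeffding's lemma: mgf bound for a centered, a.s. bounded random variable. -/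
lemma aux_hoeff_mgf {α : Type*} [MeasurableSpace α] (ν : Measure α) [IsProbabilityMeasure ν]
    (W : α → ℝ) (a b t : ℝ) (hab : a < b)
    (hmeas : AEStronglyMeasurable W ν)
    (hW : ∀ᵐ x ∂ν, W x ∈ Set.Icc a b)
    (hmean : ∫ x, W x ∂ν = 0) :
    ∫ x, Real.exp (t * W x) ∂ν ≤ Real.exp (t ^ 2 * (b - a) ^ 2 / 8) := by
  have hWint : Integrable W ν := by
    refine Integrable.mono' (integrable_const (|a| + |b|)) hmeas ?_
    filter_upwards [hW] with x hx
    rw [Real.norm_eq_abs, abs_le]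
    constructor
    · have := hx.1; have := neg_abs_le a; linarith [abs_nonneg b]
    · have := hx.2; have := le_abs_self b; linarith [abs_nonneg a]
  have ha : a ≤ 0 := by
    have h1 : ∫ x, (a : ℝ) ∂ν ≤ ∫ x, W x ∂ν :=
      integral_mono_ae (integrable_const a) hWint (by filter_upwards [hW] with x hx using hx.1)
    simpa [hmean] using h1
  have hb : 0 ≤ b := by
    have h1 : ∫ x, W x ∂ν ≤ ∫ x, (b : ℝ) ∂ν :=
      integral_mono_ae hWint (integrable_const b) (by filter_upwards [hW] with x hx using hx.2)
    simpa [hmean] using h1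
  have hba : (0:ℝ) < b - a := by linarith
  -- pointwise convexity bound
  have hpt : ∀ᵐ x ∂ν, Real.exp (t * W x) ≤
      ((b - W x) / (b - a)) * Real.exp (t * a) + ((W x - a) / (b - a)) * Real.exp (t * b) := by
    filter_upwards [hW] with x hx
    have hl1 : (0:ℝ) ≤ (b - W x) / (b - a) := by
      apply div_nonneg <;> linarith [hx.2]
    have hl2 : (0:ℝ) ≤ (W x - a) / (b - a) := by
      apply div_nonneg <;> linarith [hx.1]
    have hsum : (b - W x) / (b - a) + (W x - a) / (b - a) = 1 := by
      field_simp
      ring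
    have := convexOn_exp.2 (Set.mem_univ (t * a)) (Set.mem_univ (t * b)) hl1 hl2 hsum
    simp only [smul_eq_mul] at this
    have harg : (b - W x) / (b - a) * (t * a) + (W x - a) / (b - a) * (t * b) = t * W x := by
      field_simp
      ring
    rw [harg] at this
    exact this
  have hexp_int : Integrable (fun x => Real.exp (t * W x)) ν := by
    refine Integrable.mono' (integrable_const (Real.exp (|t| * (|a| + |b|))))
      (Real.continuous_exp.comp_aestronglyMeasurable (aestronglyMeasurable_const.mul hmeas)) ?_
    filter_upwards [hW] with x hx
    rw [Real.norm_eq_abs, abs_exp]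
    apply Real.exp_le_exp.mpr
    have h1 : |W x| ≤ |a| + |b| := by
      rw [abs_le]; constructor
      · have := neg_abs_le a; linarith [hx.1, abs_nonneg b]
      · have := le_abs_self b; linarith [hx.2, abs_nonneg a]
    calc t * W x ≤ |t * W x| := le_abs_self _
      _ = |t| * |W x| := abs_mul _ _
      _ ≤ |t| * (|a| + |b|) := by
          exact mul_le_mul_of_nonneg_left h1 (abs_nonneg t)
  have e1 : ∀ x : α, ((b - W x) / (b - a)) * Real.exp (t * a)
      + ((W x - a) / (b - a)) * Real.exp (t * b)
      = (Real.exp (t * b) - Real.exp (t * a)) / (b - a) * W x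
        + (b * Real.exp (t * a) - a * Real.exp (t * b)) / (b - a) := by
    intro x
    field_simp
    ring
  have hrhs_int : Integrable (fun x =>
      ((b - W x) / (b - a)) * Real.exp (t * a) + ((W x - a) / (b - a)) * Real.exp (t * b)) ν := by
    refine ((hWint.const_mul ((Real.exp (t * b) - Real.exp (t * a)) / (b - a))).add
      (integrable_const _)).congr (Filter.Eventually.of_forall fun x => (e1 x).symm)
  have hint_le := integral_mono_ae hexp_int hrhs_int hpt
  have hrhs_val : ∫ x, (((b - W x) / (b - a)) * Real.exp (t * a)
      + ((W x - a) / (b - a)) * Real.exp (t * b)) ∂ν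
      = (b * Real.exp (t * a) - a * Real.exp (t * b)) / (b - a) := by
    simp_rw [e1]
    rw [integral_add (hWint.const_mul _) (integrable_const _), integral_const_mul, hmean,
      integral_const]
    simp
  rw [hrhs_val] at hint_le
  refine hint_le.trans ?_
  -- now the analytic bound
  set p : ℝ := -a / (b - a) with hpdef
  have hp0 : 0 ≤ p := by apply div_nonneg <;> linarith
  have hp1 : p ≤ 1 := by rw [div_le_one hba]; linarith
  set u : ℝ := t * (b - a) with hudef
  have hkey := aux_phi_le hp0 hp1 u
  have hFpos : 0 < 1 - p + p * Real.exp u := by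
    rcases eq_or_lt_of_le hp0 with h | h
    · rw [← h]; norm_num
    · nlinarith [Real.exp_pos u, mul_pos h (Real.exp_pos u)]
  have hval : (b * Real.exp (t * a) - a * Real.exp (t * b)) / (b - a)
      = Real.exp (-p * u) * (1 - p + p * Real.exp u) := by
    have h1 : Real.exp (t * b) = Real.exp (t * a) * Real.exp u := by
      rw [← Real.exp_add]; congr 1; rw [hudef]; ring
    have h2 : -p * u = t * a := by
      rw [hpdef, hudef]; field_simp
    rw [h2, h1]
    have h3 : 1 - p = b / (b - a) := by rw [hpdef]; field_simp; ring
    rw [h3, hpdef]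
    field_simp
    ring
  rw [hval]
  calc Real.exp (-p * u) * (1 - p + p * Real.exp u)
      = Real.exp (-p * u + Real.log (1 - p + p * Real.exp u)) := by
        rw [Real.exp_add, Real.exp_log hFpos]
    _ ≤ Real.exp (u ^ 2 / 8) := Real.exp_le_exp.mpr hkey
    _ = Real.exp (t ^ 2 * (b - a) ^ 2 / 8) := by rw [hudef]; ring_nf
end HoeffMgf
section Tail
open ProbabilityTheory Real

/-- Chernoff + Hoeffding tail bound for an i.i.d. sum with a.s. bounded summands. -/
lemma aux_tail {Ω : Type*} [MeasurableSpace Ω] (P : Measure Ω) [IsProbabilityMeasure P]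
    (μ : Measure ℝ) [IsProbabilityMeasure μ]
    {n : ℕ} (X : Fin n → Ω → ℝ)
    (hX_meas : ∀ k, Measurable (X k))
    (hX_dist : ∀ k, P.map (X k) = μ)
    (hX_indep : ProbabilityTheory.iIndepFun X P)
    (g : ℝ → ℝ) (hg : Measurable g) (L D : ℝ) (hL : 0 < L)
    (hbd : ∀ᵐ x ∂μ, |g x| ≤ L) (hD : D = ∫ x, g x ∂μ) (hDpos : 0 < D) :
    (P {ω | ∑ k, g (X k ω) ≤ 0}).toReal ≤ Real.exp (-(n:ℝ) * D ^ 2 / (2 * L ^ 2)) := by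
  set t : ℝ := -D / L ^ 2 with htdef
  have ht : t ≤ 0 := by
    apply div_nonpos_of_nonpos_of_nonneg <;> nlinarith
  -- the summand functions
  set Y : Fin n → Ω → ℝ := fun k => g ∘ X k with hYdef
  have hY_meas : ∀ k, Measurable (Y k) := fun k => hg.comp (hX_meas k)
  have hY_indep : iIndepFun Y P := hX_indep.comp _ (fun _ => hg)
  -- integrability of exp (t * Y k)
  have hbd' : ∀ k, ∀ᵐ ω ∂P, |g (X k ω)| ≤ L := by
    intro k
    have : ∀ᵐ x ∂(P.map (X k)), |g x| ≤ L := by rw [hX_dist k]; exact hbd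
    exact (ae_map_iff (hX_meas k).aemeasurable
      (measurableSet_le (hg.abs) measurable_const)).mp this
  have hexp_int : ∀ k, Integrable (fun ω => Real.exp (t * Y k ω)) P := by
    intro k
    refine Integrable.mono' (integrable_const (Real.exp (|t| * L)))
      (((hY_meas k).const_mul t).exp.aestronglyMeasurable) ?_
    filter_upwards [hbd' k] with ω hω
    rw [Real.norm_eq_abs, Real.abs_exp]
    apply Real.exp_le_exp.mpr
    calc t * Y k ω ≤ |t * Y k ω| := le_abs_self _
      _ = |t| * |Y k ω| := abs_mul _ _
      _ ≤ |t| * L := mul_le_mul_of_nonneg_left hω (abs_nonneg t)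
  -- mgf of each summand
  have hmgf_k : ∀ k, mgf (Y k) P t ≤ Real.exp (t * D + t ^ 2 * L ^ 2 / 2) := by
    intro k
    have hmap : mgf (Y k) P t = ∫ x, Real.exp (t * g x) ∂μ := by
      rw [mgf, ← hX_dist k,
        integral_map (hX_meas k).aemeasurable ((hg.const_mul t).exp.aestronglyMeasurable)]
      rfl
    rw [hmap]
    have hshift : ∀ x : ℝ, Real.exp (t * g x) = Real.exp (t * D) * Real.exp (t * (g x - D)) := by
      intro x
      rw [← Real.exp_add]
      congr 1
      ring
    simp_rw [hshift]
    rw [integral_const_mul]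
    have hhoeff := aux_hoeff_mgf μ (fun x => g x - D) (-L - D) (L - D) t
      (by linarith : -L - D < L - D)
      ((hg.aestronglyMeasurable).sub aestronglyMeasurable_const)
      (by filter_upwards [hbd] with x hx
          have h1 := neg_abs_le (g x)
          have h2 := le_abs_self (g x)
          exact ⟨by linarith, by linarith⟩)
      (by
        have hgint : Integrable g μ := by
          refine Integrable.mono' (integrable_const L) hg.aestronglyMeasurable ?_
          filter_upwards [hbd] with x hx
          rwa [Real.norm_eq_abs]
        rw [integral_sub hgint (integrable_const D), integral_const]
        simp [hD])
    have h2 : t ^ 2 * (L - D - (-L - D)) ^ 2 / 8 = t ^ 2 * L ^ 2 / 2 := by ring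
    rw [h2] at hhoeff
    calc Real.exp (t * D) * ∫ x, Real.exp (t * (g x - D)) ∂μ
        ≤ Real.exp (t * D) * Real.exp (t ^ 2 * L ^ 2 / 2) := by
          exact mul_le_mul_of_nonneg_left hhoeff (Real.exp_pos _).le
      _ = Real.exp (t * D + t ^ 2 * L ^ 2 / 2) := by rw [← Real.exp_add]
  -- Chernoff bound
  have hsum_eq : (fun ω => ∑ k, g (X k ω)) = (∑ k, Y k) := by
    ext ω
    simp [hYdef, Finset.sum_apply]
  have hchern := measure_le_le_exp_mul_mgf (μ := P) (X := ∑ k, Y k) 0 ht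
    (hY_indep.integrable_exp_mul_sum hY_meas (fun k _ => hexp_int k))
  have hset : {ω | ∑ k, g (X k ω) ≤ 0} = {ω | (∑ k, Y k) ω ≤ 0} := by
    ext ω
    rw [Set.mem_setOf_eq, Set.mem_setOf_eq, ← hsum_eq]
  rw [hset]
  refine hchern.trans ?_
  rw [show -t * 0 = 0 by ring, Real.exp_zero, one_mul]
  rw [hY_indep.mgf_sum hY_meas]
  calc ∏ k, mgf (Y k) P t ≤ ∏ k : Fin n, Real.exp (t * D + t ^ 2 * L ^ 2 / 2) := by
        refine Finset.prod_le_prod (fun k _ => mgf_nonneg) (fun k _ => hmgf_k k)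
    _ = Real.exp ((n : ℝ) * (t * D + t ^ 2 * L ^ 2 / 2)) := by
        rw [Finset.prod_const, Finset.card_univ, Fintype.card_fin, ← Real.exp_nat_mul]
    _ = Real.exp (-(n:ℝ) * D ^ 2 / (2 * L ^ 2)) := by
        congr 1
        rw [htdef]
        field_simp
        ring
end Tail

/-- Sticky case for a generalized Fréchet mean on the line: if both one-sided
derivatives of the objective at `c` are positive, then `c` is the unique population
minimizer, and the empirical minimizing set equals `{c}` with exponentially large
probability. -/
theorem stmt_10 (ℓ : ℝ → ℝ)
    (h_convex : ConvexOn ℝ (Set.Ici 0) ℓ)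
    (h_smono : StrictMonoOn ℓ (Set.Ici 0))
    (h_nonneg : ∀ z ∈ Set.Ici (0 : ℝ), 0 ≤ ℓ z)
    (ℓp ℓm : ℝ → ℝ)
    (h_right : ∀ z, 0 ≤ z → HasDerivWithinAt ℓ (ℓp z) (Set.Ici z) z)
    (h_left : ∀ z, 0 < z → HasDerivWithinAt ℓ (ℓm z) (Set.Iic z) z)
    (A B : ℝ) (hAB : A < B)
    (μ : Measure ℝ) [IsProbabilityMeasure μ] (hsupp : μ (Set.Icc A B) = 1)
    (c : ℝ) (hc : c ∈ Set.Icc A B)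
    (Dplus Dminus : ℝ)
    (hDplus_def :
      Dplus = (∫ x in Set.Iic c, ℓp (c - x) ∂μ) - ∫ x in Set.Ioi c, ℓm (x - c) ∂μ)
    (hDminus_def :
      Dminus = (∫ x in Set.Ici c, ℓp (x - c) ∂μ) - ∫ x in Set.Iio c, ℓm (c - x) ∂μ)
    (hDplus : 0 < Dplus) (hDminus : 0 < Dminus)
    {Ω : Type*} [MeasurableSpace Ω] (P : Measure Ω) [IsProbabilityMeasure P]
    (n : ℕ) (hn : 1 ≤ n)
    (X : Fin n → Ω → ℝ)
    (hX_meas : ∀ k, Measurable (X k))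
    (hX_dist : ∀ k, P.map (X k) = μ)
    (hX_indep : ProbabilityTheory.iIndepFun X P) :
    ({α : ℝ | ∀ β : ℝ, (∫ x, ℓ |α - x| ∂μ) ≤ ∫ x, ℓ |β - x| ∂μ} = {c}) ∧
    1 - Real.exp (-(n : ℝ) * Dplus ^ 2 / (2 * ℓp (B - A) ^ 2))
      - Real.exp (-(n : ℝ) * Dminus ^ 2 / (2 * ℓp (B - A) ^ 2)) ≤
    (P {ω | {α : ℝ | ∀ β : ℝ,
        ((n : ℝ)⁻¹ * ∑ k, ℓ |α - X k ω|) ≤ (n : ℝ)⁻¹ * ∑ k, ℓ |β - X k ω|}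
      = {c}}).toReal := by
  have hBA : (0:ℝ) < B - A := by linarith
  set L : ℝ := ℓp (B - A) with hLdef
  have hLpos : 0 < L := by
    have h1 := aux_lm_pos h_convex h_smono h_left hBA
    have h2 := aux_lm_le_lp h_convex h_right h_left hBA
    linarith
  -- a.e. support
  have hae : ∀ᵐ x ∂μ, x ∈ Set.Icc A B := by
    have hcompl : μ (Set.Icc A B)ᶜ = 0 := by
      rw [measure_compl measurableSet_Icc (measure_ne_top μ _), hsupp, measure_univ]
      simp
    rw [MeasureTheory.ae_iff]
    exact hcompl
  -- the two derivative fields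
  set gP : ℝ → ℝ := auxG ℓp ℓm c with hgPdef
  set gM : ℝ → ℝ := fun x => auxG ℓp ℓm (-c) (-x) with hgMdef
  have hgP_meas : Measurable gP := auxG_measurable h_convex h_smono h_right h_left c
  have hgM_meas : Measurable gM :=
    (auxG_measurable h_convex h_smono h_right h_left (-c)).comp measurable_neg
  have hgP_bd : ∀ x ∈ Set.Icc A B, |gP x| ≤ L := by
    intro x hx
    exact auxG_abs_le h_convex h_smono h_right h_left
      (by linarith [hx.1, hc.2] : c - x ≤ B - A)
      (by linarith [hx.2, hc.1] : x - c ≤ B - A) hBA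
  have hgM_bd : ∀ x ∈ Set.Icc A B, |gM x| ≤ L := by
    intro x hx
    exact auxG_abs_le h_convex h_smono h_right h_left
      (by simp only [sub_neg_eq_add]; linarith [hx.2, hc.1] : -c - -x ≤ B - A)
      (by simp only [neg_sub_neg]; linarith [hx.1, hc.2] : -x - -c ≤ B - A) hBA
  have hgP_bdae : ∀ᵐ x ∂μ, |gP x| ≤ L := by filter_upwards [hae] with x hx using hgP_bd x hx
  have hgM_bdae : ∀ᵐ x ∂μ, |gM x| ≤ L := by filter_upwards [hae] with x hx using hgM_bd x hx
  have hgP_int : Integrable gP μ := by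
    refine Integrable.mono' (integrable_const L) hgP_meas.aestronglyMeasurable ?_
    filter_upwards [hgP_bdae] with x hx using by rwa [Real.norm_eq_abs]
  have hgM_int : Integrable gM μ := by
    refine Integrable.mono' (integrable_const L) hgM_meas.aestronglyMeasurable ?_
    filter_upwards [hgM_bdae] with x hx using by rwa [Real.norm_eq_abs]
  have hDp_eq : ∫ x, gP x ∂μ = Dplus := by
    rw [hgPdef, auxG_integral_split μ c hgP_int, hDplus_def]
  have hDm_eq : ∫ x, gM x ∂μ = Dminus := by
    rw [hgMdef, auxG_integral_split' μ c hgM_int, hDminus_def]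
  -- integrability of the loss functions
  have hloss_int : ∀ β : ℝ, Integrable (fun x => ℓ |β - x|) μ := by
    intro β
    have hcont := aux_l_comp_cont h_convex h_right h_left (ℓ := ℓ) β
    obtain ⟨C, hC⟩ := (isCompact_Icc (a := A) (b := B)).exists_bound_of_continuousOn
      hcont.continuousOn
    refine Integrable.mono' (integrable_const C) hcont.aestronglyMeasurable ?_
    filter_upwards [hae] with x hx using hC x hx
  -- Part 1
  have part1 : {α : ℝ | ∀ β : ℝ, (∫ x, ℓ |α - x| ∂μ) ≤ ∫ x, ℓ |β - x| ∂μ} = {c} := by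
    refine aux_key h_convex h_smono h_right h_left c μ hloss_int hgP_int hgM_int ?_ ?_
    · rw [show (∫ x, auxG ℓp ℓm c x ∂μ) = ∫ x, gP x ∂μ from rfl, hDp_eq]; exact hDplus
    · rw [show (∫ x, auxG ℓp ℓm (-c) (-x) ∂μ) = ∫ x, gM x ∂μ from rfl, hDm_eq]; exact hDminus
  refine ⟨part1, ?_⟩
  -- Part 2 : events
  set E1 : Set Ω := {ω | 0 < ∑ k, gP (X k ω)} with hE1def
  set E2 : Set Ω := {ω | 0 < ∑ k, gM (X k ω)} with hE2def
  have hE1_meas : MeasurableSet E1 :=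
    measurableSet_lt measurable_const (Finset.measurable_sum _ fun k _ => hgP_meas.comp (hX_meas k))
  have hE2_meas : MeasurableSet E2 :=
    measurableSet_lt measurable_const (Finset.measurable_sum _ fun k _ => hgM_meas.comp (hX_meas k))
  -- tail bounds
  have htail1 : (P E1ᶜ).toReal ≤ Real.exp (-(n:ℝ) * Dplus ^ 2 / (2 * L ^ 2)) := by
    have hcompl : E1ᶜ = {ω | ∑ k, gP (X k ω) ≤ 0} := by
      ext ω; simp [hE1def, not_lt]
    rw [hcompl]
    exact aux_tail P μ X hX_meas hX_dist hX_indep gP hgP_meas L Dplus hLpos hgP_bdae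
      hDp_eq.symm hDplus
  have htail2 : (P E2ᶜ).toReal ≤ Real.exp (-(n:ℝ) * Dminus ^ 2 / (2 * L ^ 2)) := by
    have hcompl : E2ᶜ = {ω | ∑ k, gM (X k ω) ≤ 0} := by
      ext ω; simp [hE2def, not_lt]
    rw [hcompl]
    exact aux_tail P μ X hX_meas hX_dist hX_indep gM hgM_meas L Dminus hLpos hgM_bdae
      hDm_eq.symm hDminus
  -- inclusion of the good event into the target event
  have hdirac_int : ∀ (f : ℝ → ℝ) (a : ℝ), Integrable f (Measure.dirac a) := by
    intro f a
    refine (integrable_const (f a)).congr ?_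
    rw [Filter.EventuallyEq, MeasureTheory.ae_dirac_eq]
    exact Filter.eventually_pure.mpr rfl
  have hsub : E1 ∩ E2 ⊆ {ω | {α : ℝ | ∀ β : ℝ,
      ((n : ℝ)⁻¹ * ∑ k, ℓ |α - X k ω|) ≤ (n : ℝ)⁻¹ * ∑ k, ℓ |β - X k ω|} = {c}} := by
    rintro ω ⟨hω1, hω2⟩
    set ν : Measure ℝ := ∑ k : Fin n, Measure.dirac (X k ω) with hνdef
    have hνint : ∀ f : ℝ → ℝ, Integrable f ν := by
      intro f
      exact integrable_finset_sum_measure.mpr (fun k _ => hdirac_int f (X k ω))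
    have hνeval : ∀ f : ℝ → ℝ, ∫ x, f x ∂ν = ∑ k, f (X k ω) := by
      intro f
      rw [hνdef, integral_finset_sum_measure (fun k _ => hdirac_int f (X k ω))]
      simp [integral_dirac]
    have hkey := aux_key h_convex h_smono h_right h_left c ν
      (fun β => hνint _) (hνint gP) (hνint gM)
      (by rw [show (∫ x, auxG ℓp ℓm c x ∂ν) = ∫ x, gP x ∂ν from rfl, hνeval gP]; exact hω1)
      (by rw [show (∫ x, auxG ℓp ℓm (-c) (-x) ∂ν) = ∫ x, gM x ∂ν from rfl, hνeval gM]; exact hω2)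
    have hnpos : (0:ℝ) < (n : ℝ)⁻¹ := by
      have : (0:ℝ) < (n:ℝ) := by exact_mod_cast hn
      positivity
    have hseteq : {α : ℝ | ∀ β : ℝ,
        ((n : ℝ)⁻¹ * ∑ k, ℓ |α - X k ω|) ≤ (n : ℝ)⁻¹ * ∑ k, ℓ |β - X k ω|}
        = {α : ℝ | ∀ β : ℝ, (∫ x, ℓ |α - x| ∂ν) ≤ ∫ x, ℓ |β - x| ∂ν} := by
      ext α
      simp only [Set.mem_setOf_eq]
      constructor
      · intro h β
        rw [hνeval (fun x => ℓ |α - x|), hνeval (fun x => ℓ |β - x|)]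
        exact le_of_mul_le_mul_left (h β) hnpos
      · intro h β
        have := h β
        rw [hνeval (fun x => ℓ |α - x|), hνeval (fun x => ℓ |β - x|)] at this
        exact mul_le_mul_of_nonneg_left this hnpos.le
    rw [Set.mem_setOf_eq, hseteq]
    exact hkey
  -- final arithmetic
  have hfin : ∀ s : Set Ω, P s ≠ ⊤ := fun s => measure_ne_top P s
  have h12 : (P (E1 ∩ E2)ᶜ).toReal ≤ (P E1ᶜ).toReal + (P E2ᶜ).toReal := by
    rw [Set.compl_inter]
    refine (ENNReal.toReal_mono ?_ (measure_union_le _ _)).trans ?_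
    · exact ENNReal.add_ne_top.mpr ⟨hfin _, hfin _⟩
    · rw [ENNReal.toReal_add (hfin _) (hfin _)]
  have hcompl_sum : (P (E1 ∩ E2)).toReal + (P (E1 ∩ E2)ᶜ).toReal = 1 := by
    rw [← ENNReal.toReal_add (hfin _) (hfin _),
      measure_add_measure_compl (hE1_meas.inter hE2_meas), measure_univ, ENNReal.toReal_one]
  have hmono2 : (P (E1 ∩ E2)).toReal ≤ (P {ω | {α : ℝ | ∀ β : ℝ,
      ((n : ℝ)⁻¹ * ∑ k, ℓ |α - X k ω|) ≤ (n : ℝ)⁻¹ * ∑ k, ℓ |β - X k ω|} = {c}}).toReal :=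
    ENNReal.toReal_mono (hfin _) (measure_mono hsub)
  linarith
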